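/- Let D be a real symmetric n×n matrix. The matrix Σ_r E_r ∘ E_r (summed over the spectral idempotents of D) equals (1/n)J if and only if every eigenvalue of D is simple and every eigenvector of D is a scalar multiple of a vector all of whose entries are ±1. -/

import Mathlib

open Matrix BigOperators

/-- Diagonal entry of a symmetric idempotent is the sum of squares of its row. -/
lemma aux_diag_eq_sum_sq {n : ℕ} {A : Matrix (Fin n) (Fin n) ℝ}
    (hs : A.IsSymm) (hi : A * A = A) (i : Fin n) :
    A i i = ∑ k, (A i k) ^ 2 := by
  conv_lhs => rw [← hi]
  rw [Matrix.mul_apply]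
  refine Finset.sum_congr rfl fun k _ => ?_
  rw [hs.apply i k, sq]

/-- Sum of matrices applied to a vector. -/
lemma aux_sum_mulVec {n m : ℕ} (A : Fin m → Matrix (Fin n) (Fin n) ℝ) (v : Fin n → ℝ) :
    (∑ s, A s).mulVec v = ∑ s, (A s).mulVec v := by
  ext i
  simp only [Matrix.mulVec, dotProduct, Matrix.sum_apply, Finset.sum_apply,
    Finset.sum_mul]
  rw [Finset.sum_comm]

/-- A nonzero symmetric idempotent has trace at least 1. -/
lemma aux_trace_ge_one {n : ℕ} {A : Matrix (Fin n) (Fin n) ℝ}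
    (hs : A.IsSymm) (hi : A * A = A) (hne : A ≠ 0) :
    (1 : ℝ) ≤ ∑ j, A j j := by
  obtain ⟨a, b, hab⟩ : ∃ a b, A a b ≠ 0 := by
    by_contra h
    push_neg at h
    exact hne (by ext i j; simpa using h i j)
  set v : Fin n → ℝ := fun k => A k b with hv
  have hAv : ∀ j, ∑ k, A j k * v k = v j := by
    intro j
    have := congrArg (fun M => M j b) hi
    simpa [Matrix.mul_apply] using this
  set S : ℝ := ∑ k, (v k) ^ 2 with hS
  have hSpos : 0 < S := by
    have h1 : (v a) ^ 2 ≤ S := by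
      apply Finset.single_le_sum (f := fun k => (v k) ^ 2)
      · intro k _; positivity
      · exact Finset.mem_univ a
    have h2 : 0 < (v a) ^ 2 := by positivity
    linarith
  have key : ∀ j, (v j) ^ 2 ≤ A j j * S := by
    intro j
    have hcs := Finset.sum_mul_sq_le_sq_mul_sq Finset.univ (fun k => A j k) v
    calc (v j) ^ 2 = (∑ k, A j k * v k) ^ 2 := by rw [hAv j]
      _ ≤ (∑ k, (A j k) ^ 2) * (∑ k, (v k) ^ 2) := hcs
      _ = A j j * S := by rw [← aux_diag_eq_sum_sq hs hi j, hS]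
  have hsum : S ≤ (∑ j, A j j) * S := by
    calc S = ∑ j, (v j) ^ 2 := hS
      _ ≤ ∑ j, A j j * S := Finset.sum_le_sum fun j _ => key j
      _ = (∑ j, A j j) * S := by rw [Finset.sum_mul]
  nlinarith

/-- For a real symmetric `D` with spectral decomposition
`D = Σ_r λ_r E_r`, we have `Σ_r E_r ∘ E_r = (1/n)J` if and only if every eigenvalue
of `D` is simple (each eigenprojection has trace 1) and every eigenvector of `D`
is a scalar multiple of a `±1` vector. -/
theorem continuous_avg_uniform_mixing_characterization
    (n m : ℕ) (hn : 0 < n)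
    (D : Matrix (Fin n) (Fin n) ℝ)
    (hDsymm : D.IsSymm)
    (lam : Fin m → ℝ)
    (hlam_inj : Function.Injective lam)
    (E : Fin m → Matrix (Fin n) (Fin n) ℝ)
    (hdecomp : D = ∑ r, lam r • E r)
    (horth : ∀ r s, r ≠ s → E r * E s = 0)
    (hidem : ∀ r, E r * E r = E r)
    (hsymm : ∀ r, (E r).IsSymm)
    (hEne : ∀ r, E r ≠ 0)
    (hsum : ∑ r, E r = 1) :
    ((∑ r, (E r).hadamard (E r)) = (n : ℝ)⁻¹ • Matrix.of fun _ _ => (1 : ℝ)) ↔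
      ((∀ r, Matrix.trace (E r) = 1) ∧
       (∀ (μ : ℝ) (v : Fin n → ℝ), v ≠ 0 → D.mulVec v = μ • v →
          ∃ (c : ℝ) (s : Fin n → ℝ), (∀ i, s i = 1 ∨ s i = -1) ∧ v = c • s)) := by
  have hncast : (0 : ℝ) < (n : ℝ) := by exact_mod_cast hn
  have hnne : (n : ℝ) ≠ 0 := ne_of_gt hncast
  -- entrywise sum of E's equals identity entries
  have hsum_app : ∀ i j, ∑ r, E r i j = (1 : Matrix (Fin n) (Fin n) ℝ) i j := by
    intro i j
    have := congrArg (fun M => M i j) hsum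
    simpa [Matrix.sum_apply] using this
  -- D * E r = lam r • E r
  have hDE : ∀ r, D * E r = lam r • E r := by
    intro r
    rw [hdecomp, Finset.sum_mul]
    rw [Finset.sum_eq_single r]
    · rw [Matrix.smul_mul, hidem]
    · intro s _ hsr
      rw [Matrix.smul_mul, horth s r hsr, smul_zero]
    · intro h; exact absurd (Finset.mem_univ r) h
  -- E s * D = lam s • E s
  have hED : ∀ s, E s * D = lam s • E s := by
    intro s
    rw [hdecomp, Finset.mul_sum]
    rw [Finset.sum_eq_single s]
    · rw [Matrix.mul_smul, hidem]
    · intro r _ hrs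
      rw [Matrix.mul_smul, horth s r (Ne.symm hrs), smul_zero]
    · intro h; exact absurd (Finset.mem_univ s) h
  constructor
  · -- forward direction
    intro hmix
    have hmix' : ∀ i j, ∑ r, (E r i j) ^ 2 = (n : ℝ)⁻¹ := by
      intro i j
      have := congrArg (fun M => M i j) hmix
      simpa [Matrix.sum_apply, Matrix.hadamard_apply, sq] using this
    -- trace of each E r
    have htrge : ∀ r, (1 : ℝ) ≤ Matrix.trace (E r) := by
      intro r
      simpa [Matrix.trace, Matrix.diag] using aux_trace_ge_one (hsymm r) (hidem r) (hEne r)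
    have htrsum : ∑ r, Matrix.trace (E r) = (n : ℝ) := by
      rw [← Matrix.trace_sum, hsum, Matrix.trace_one]
      simp
    -- m ≥ n
    have hmn : (n : ℝ) ≤ (m : ℝ) := by
      set i0 : Fin n := ⟨0, hn⟩
      have h1 : ∑ r, E r i0 i0 = 1 := by
        rw [hsum_app i0 i0, Matrix.one_apply_eq]
      have hcs := sq_sum_le_card_mul_sum_sq (s := Finset.univ)
        (f := fun r => E r i0 i0)
      rw [h1, hmix' i0 i0] at hcs
      simp only [Finset.card_univ, Fintype.card_fin, one_pow] at hcs
      have hmm : (m : ℝ) * (n : ℝ)⁻¹ * n = m := by field_simp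
      nlinarith [mul_le_mul_of_nonneg_right hcs (le_of_lt hncast), hmm]
    have htr1 : ∀ r, Matrix.trace (E r) = 1 := by
      have hsum0 : ∑ r, (Matrix.trace (E r) - 1) ≤ 0 := by
        rw [Finset.sum_sub_distrib, htrsum]
        simp only [Finset.sum_const, Finset.card_univ, Fintype.card_fin, nsmul_eq_mul, mul_one]
        linarith
      have heach : ∀ r ∈ Finset.univ, (0 : ℝ) ≤ Matrix.trace (E r) - 1 :=
        fun r _ => by linarith [htrge r]
      have hzero : ∑ r, (Matrix.trace (E r) - 1) = 0 :=
        le_antisymm hsum0 (Finset.sum_nonneg heach)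
      intro r
      have := (Finset.sum_eq_zero_iff_of_nonneg heach).mp hzero r (Finset.mem_univ r)
      linarith
    have hm_eq : (m : ℝ) = (n : ℝ) := by
      have : ∑ r : Fin m, (1 : ℝ) = (n : ℝ) := by
        rw [← htrsum]; exact Finset.sum_congr rfl fun r _ => (htr1 r).symm
      simpa using this
    -- all diagonal entries equal 1/n
    have hdiag : ∀ r i, E r i i = (n : ℝ)⁻¹ := by
      intro r i
      have h1 : ∑ s, E s i i = 1 := by rw [hsum_app i i, Matrix.one_apply_eq]
      have h2 : ∑ s, (E s i i) ^ 2 = (n : ℝ)⁻¹ := hmix' i i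
      have hz : ∑ s, (E s i i - (n : ℝ)⁻¹) ^ 2 = 0 := by
        have expand : ∀ s : Fin m, (E s i i - (n : ℝ)⁻¹) ^ 2 =
            (E s i i) ^ 2 - 2 * (n : ℝ)⁻¹ * E s i i + (n : ℝ)⁻¹ ^ 2 := by
          intro s; ring
        rw [Finset.sum_congr rfl fun s _ => expand s]
        rw [Finset.sum_add_distrib, Finset.sum_sub_distrib, h2, ← Finset.mul_sum, h1]
        simp only [Finset.sum_const, Finset.card_univ, Fintype.card_fin, nsmul_eq_mul]
        rw [hm_eq]
        field_simp
        ring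
      have := (Finset.sum_eq_zero_iff_of_nonneg
        (fun s _ => sq_nonneg (E s i i - (n : ℝ)⁻¹))).mp hz r (Finset.mem_univ r)
      have := pow_eq_zero_iff (n := 2) (by norm_num) |>.mp this
      linarith [this]
    refine ⟨htr1, ?_⟩
    -- eigenvector flatness
    intro μ v hv hDv
    have hvdecomp : v = ∑ s, (E s).mulVec v := by
      rw [← aux_sum_mulVec, hsum, Matrix.one_mulVec]
    have hkill : ∀ s, (lam s - μ) • ((E s).mulVec v) = 0 := by
      intro s
      have h1 : (E s).mulVec (D.mulVec v) = lam s • (E s).mulVec v := by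
        rw [Matrix.mulVec_mulVec, hED s, Matrix.smul_mulVec]
      have h2 : (E s).mulVec (D.mulVec v) = μ • (E s).mulVec v := by
        rw [hDv, Matrix.mulVec_smul]
      rw [sub_smul, h1.symm.trans h2]
      simp
    obtain ⟨r0, hr0⟩ : ∃ r0, (E r0).mulVec v ≠ 0 := by
      by_contra h
      push_neg at h
      apply hv
      rw [hvdecomp]
      exact Finset.sum_eq_zero fun s _ => h s
    have hmu : lam r0 = μ := by
      have := hkill r0
      rcases smul_eq_zero.mp this with h | h
      · linarith [sub_eq_zero.mp h]
      · exact absurd h hr0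
    have hEv : v = (E r0).mulVec v := by
      have hz : ∀ s ∈ Finset.univ, s ≠ r0 → (E s).mulVec v = 0 := by
        intro s _ hs
        have hne : lam s - μ ≠ 0 := by
          intro h
          exact hs (hlam_inj (by linarith [sub_eq_zero.mp h, hmu]))
        rcases smul_eq_zero.mp (hkill s) with h | h
        · exact absurd h hne
        · exact h
      calc v = ∑ s, (E s).mulVec v := hvdecomp
        _ = (E r0).mulVec v :=
          Finset.sum_eq_single r0 hz (fun h => absurd (Finset.mem_univ r0) h)
    -- flatness
    set A := E r0 with hA
    set S : ℝ := ∑ k, (v k) ^ 2 with hS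
    have hSpos : 0 < S := by
      obtain ⟨a, ha⟩ := Function.ne_iff.mp hv
      have h1 : (v a) ^ 2 ≤ S := by
        apply Finset.single_le_sum (f := fun k => (v k) ^ 2)
        · intro k _; positivity
        · exact Finset.mem_univ a
      have h2 : 0 < (v a) ^ 2 := sq_pos_of_ne_zero ha
      linarith
    have hAv : ∀ i, ∑ k, A i k * v k = v i := by
      intro i
      have := congrFun hEv i
      simpa [Matrix.mulVec, dotProduct] using this.symm
    have hvle : ∀ i, (v i) ^ 2 ≤ (n : ℝ)⁻¹ * S := by
      intro i
      have hcs := Finset.sum_mul_sq_le_sq_mul_sq Finset.univ (fun k => A i k) v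
      calc (v i) ^ 2 = (∑ k, A i k * v k) ^ 2 := by rw [hAv i]
        _ ≤ (∑ k, (A i k) ^ 2) * (∑ k, (v k) ^ 2) := hcs
        _ = A i i * S := by rw [← aux_diag_eq_sum_sq (hsymm r0) (hidem r0) i, hS]
        _ = (n : ℝ)⁻¹ * S := by rw [hA, hdiag r0 i]
    have hveq : ∀ i, (v i) ^ 2 = (n : ℝ)⁻¹ * S := by
      have hz : ∑ i, ((n : ℝ)⁻¹ * S - (v i) ^ 2) = 0 := by
        rw [Finset.sum_sub_distrib]
        simp only [Finset.sum_const, Finset.card_univ, Fintype.card_fin, nsmul_eq_mul]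
        rw [← hS]
        field_simp
        ring
      intro i
      have := (Finset.sum_eq_zero_iff_of_nonneg
        (fun i _ => by linarith [hvle i])).mp hz i (Finset.mem_univ i)
      linarith
    set c : ℝ := Real.sqrt ((n : ℝ)⁻¹ * S) with hc
    have hSn : 0 < (n : ℝ)⁻¹ * S := mul_pos (inv_pos.mpr hncast) hSpos
    have hcpos : 0 < c := Real.sqrt_pos.mpr hSn
    have hcsq : c ^ 2 = (n : ℝ)⁻¹ * S := Real.sq_sqrt (le_of_lt hSn)
    refine ⟨c, fun i => v i / c, ?_, ?_⟩
    · intro i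
      have hv2 : (v i) ^ 2 = c ^ 2 := by rw [hveq i, hcsq]
      have h1 : (v i / c) * (v i / c) = 1 := by
        field_simp
        linear_combination hv2
      exact mul_self_eq_one_iff.mp h1
    · funext i
      simp only [Pi.smul_apply, smul_eq_mul]
      field_simp
  · -- converse direction
    rintro ⟨htr, hflat⟩
    -- key: (E r i j)^2 = E r j j / n
    have key : ∀ (r : Fin m) (i j : Fin n), (E r i j) ^ 2 = E r j j * (n : ℝ)⁻¹ := by
      intro r i j
      set v : Fin n → ℝ := fun k => E r k j with hv
      by_cases hvz : v = 0
      · have h1 : E r i j = 0 := congrFun hvz i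
        have h2 : E r j j = 0 := congrFun hvz j
        rw [h1, h2]; ring
      · have heig : D.mulVec v = lam r • v := by
          funext i'
          have := congrArg (fun M => M i' j) (hDE r)
          simp only [Matrix.mul_apply, Matrix.smul_apply, smul_eq_mul] at this
          simpa [Matrix.mulVec, dotProduct, hv] using this
        obtain ⟨c, s, hs, hcs⟩ := hflat (lam r) v hvz heig
        have hvi : ∀ k, v k = c * s k := fun k => congrFun hcs k
        have hssq : ∀ k, (s k) ^ 2 = 1 := by
          intro k
          rcases hs k with h | h <;> rw [h] <;> ring
        have hEij : (E r i j) ^ 2 = c ^ 2 := by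
          have : E r i j = v i := rfl
          rw [this, hvi i, mul_pow, hssq i, mul_one]
        have hEjj : E r j j = (n : ℝ) * c ^ 2 := by
          have h1 : E r j j = ∑ k, (E r j k) ^ 2 :=
            aux_diag_eq_sum_sq (hsymm r) (hidem r) j
          have h2 : ∀ k, (E r j k) ^ 2 = c ^ 2 := by
            intro k
            have hsym' : E r j k = E r k j := ((hsymm r).apply j k).symm
            rw [hsym']
            show (v k) ^ 2 = c ^ 2
            rw [hvi k, mul_pow, hssq k, mul_one]
          rw [h1, Finset.sum_congr rfl fun k _ => h2 k]
          simp [mul_comm]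
        rw [hEij, hEjj]
        field_simp
    ext i j
    have lhs_eq : (∑ r, (E r).hadamard (E r)) i j = ∑ r, (E r i j) ^ 2 := by
      simp [Matrix.sum_apply, Matrix.hadamard_apply, sq]
    rw [lhs_eq]
    have : ∑ r, (E r i j) ^ 2 = (∑ r, E r j j) * (n : ℝ)⁻¹ := by
      rw [Finset.sum_mul]
      exact Finset.sum_congr rfl fun r _ => key r i j
    rw [this, hsum_app j j, Matrix.one_apply_eq]
    simp
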